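/- For all y ≥ 0, the Gaussian tail satisfies √(2/π) · e^{-y²/2}/(y + √(y²+4)) < (1/√(2π)) ∫_y^∞ e^{-u²/2} du ≤ √(2/π) · e^{-y²/2}/(y + √(y²+8/π)). -/

import Mathlib

open Real MeasureTheory Set Filter

noncomputable def gg (c u : ℝ) : ℝ := 2 * (Real.sqrt (u ^ 2 + c) - u) / c

noncomputable def hh (c u : ℝ) : ℝ :=
  Real.exp (-u ^ 2 / 2) *
    (u * gg c u - 2 * (u / Real.sqrt (u ^ 2 + c) - 1) / c - 1)

lemma sqpos (c u : ℝ) (hc : 0 < c) : 0 < Real.sqrt (u ^ 2 + c) :=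
  Real.sqrt_pos.2 (by positivity)

lemma sqsq (c u : ℝ) (hc : 0 < c) : Real.sqrt (u ^ 2 + c) ^ 2 = u ^ 2 + c :=
  Real.sq_sqrt (by positivity)

lemma u_le_s (c u : ℝ) (hc : 0 < c) (hu : 0 ≤ u) : u ≤ Real.sqrt (u ^ 2 + c) := by
  nlinarith [sqsq c u hc, sqpos c u hc]

lemma hasDerivS (c u : ℝ) (hc : 0 < c) :
    HasDerivAt (fun u : ℝ => Real.sqrt (u ^ 2 + c)) (u / Real.sqrt (u ^ 2 + c)) u := by
  have h1 : HasDerivAt (fun u : ℝ => u ^ 2 + c) (2 * u) u := by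
    simpa using (hasDerivAt_pow 2 u).add_const c
  have h2 := (Real.hasDerivAt_sqrt (x := u ^ 2 + c) (by positivity)).comp u h1
  refine h2.congr_deriv ?_
  field_simp

lemma hasDerivF (c : ℝ) (hc : 0 < c) (u : ℝ) :
    HasDerivAt (fun u : ℝ => -(Real.exp (-u ^ 2 / 2) * gg c u))
      (hh c u + Real.exp (-u ^ 2 / 2)) u := by
  have hE : HasDerivAt (fun u : ℝ => Real.exp (-u ^ 2 / 2))
      (Real.exp (-u ^ 2 / 2) * (-u)) u := by
    have h0 : HasDerivAt (fun u : ℝ => -u ^ 2 / 2) (-u) u := by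
      have := ((hasDerivAt_pow 2 u).neg.div_const 2)
      exact this.congr_deriv (by ring)
    exact (Real.hasDerivAt_exp _).comp u h0
  have hG : HasDerivAt (fun u : ℝ => gg c u)
      (2 * (u / Real.sqrt (u ^ 2 + c) - 1) / c) u := by
    unfold gg
    exact (((hasDerivS c u hc).sub (hasDerivAt_id u)).const_mul 2).div_const c
  have := (hE.mul hG).neg
  refine this.congr_deriv ?_
  unfold hh gg
  ring

lemma contS (c : ℝ) : Continuous (fun u : ℝ => Real.sqrt (u ^ 2 + c)) :=
  ((continuous_pow 2).add continuous_const).sqrt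

lemma contHH (c : ℝ) (hc : 0 < c) : Continuous (fun u : ℝ => hh c u) := by
  unfold hh gg
  have h1 : Continuous (fun u : ℝ => Real.exp (-u ^ 2 / 2)) := by continuity
  have h2 : Continuous (fun u : ℝ => u / Real.sqrt (u ^ 2 + c)) :=
    continuous_id.div (contS c) (fun u => (sqpos c u hc).ne')
  continuity

lemma intExp (y : ℝ) : IntegrableOn (fun u : ℝ => Real.exp (-u ^ 2 / 2)) (Ioi y) := by
  have h : (fun u : ℝ => Real.exp (-u ^ 2 / 2)) = fun u : ℝ => Real.exp (-(1/2 : ℝ) * u ^ 2) := by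
    ext u; ring_nf
  rw [h]
  exact (integrable_exp_neg_mul_sq (by norm_num)).integrableOn
lemma gg_nonneg (c u : ℝ) (hc : 0 < c) (hu : 0 ≤ u) : 0 ≤ gg c u := by
  unfold gg
  have := u_le_s c u hc hu
  apply div_nonneg _ hc.le
  linarith

lemma gg_le (c u : ℝ) (hc : 0 < c) (hu : 0 ≤ u) : gg c u ≤ 2 / Real.sqrt c := by
  unfold gg
  rw [div_le_div_iff₀ hc (Real.sqrt_pos.2 hc)]
  have h1 := sqsq c u hc
  have h2 := sqpos c u hc
  have h3 : Real.sqrt c ^ 2 = c := Real.sq_sqrt hc.le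
  have h4 : 0 < Real.sqrt c := Real.sqrt_pos.2 hc
  nlinarith [sq_nonneg (Real.sqrt (u ^ 2 + c) - u - Real.sqrt c), u_le_s c u hc hu]

lemma ug_bounds (c u : ℝ) (hc : 0 < c) (hu : 0 ≤ u) :
    0 ≤ u * gg c u ∧ u * gg c u ≤ 1 := by
  have h1 := sqsq c u hc
  have h2 := sqpos c u hc
  have h3 := u_le_s c u hc hu
  constructor
  · have : 0 ≤ gg c u := gg_nonneg c u hc hu
    positivity
  · unfold gg
    have h5 : u * (2 * (Real.sqrt (u ^ 2 + c) - u) / c) =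
        2 * u * (Real.sqrt (u ^ 2 + c) - u) / c := by ring
    rw [h5, div_le_one hc]
    nlinarith [sq_nonneg (Real.sqrt (u ^ 2 + c) - u)]

lemma gp_bounds (c u : ℝ) (hc : 0 < c) (hu : 0 ≤ u) :
    -(2 / c) ≤ 2 * (u / Real.sqrt (u ^ 2 + c) - 1) / c ∧
      2 * (u / Real.sqrt (u ^ 2 + c) - 1) / c ≤ 0 := by
  have h2 := sqpos c u hc
  have hr0 : 0 ≤ u / Real.sqrt (u ^ 2 + c) := by positivity
  have hr1 : u / Real.sqrt (u ^ 2 + c) ≤ 1 := by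
    rw [div_le_one h2]; exact u_le_s c u hc hu
  constructor
  · have hq : 0 ≤ 2 * (u / Real.sqrt (u ^ 2 + c)) / c := by positivity
    have he : -(2 / c) + 2 * (u / Real.sqrt (u ^ 2 + c)) / c =
        2 * (u / Real.sqrt (u ^ 2 + c) - 1) / c := by ring
    linarith
  · apply div_nonpos_of_nonpos_of_nonneg ?_ hc.le
    nlinarith

lemma intHH (c y : ℝ) (hc : 0 < c) (hy : 0 ≤ y) :
    IntegrableOn (fun u : ℝ => hh c u) (Ioi y) := by
  apply Integrable.mono' ((intExp y).const_mul (2 + 2 / c))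
  · exact (contHH c hc).aestronglyMeasurable.restrict
  · filter_upwards [ae_restrict_mem measurableSet_Ioi] with u hu
    have hu0 : 0 ≤ u := le_trans hy (le_of_lt hu)
    have hb1 := ug_bounds c u hc hu0
    have hb2 := gp_bounds c u hc hu0
    have hE := Real.exp_pos (-u ^ 2 / 2)
    unfold hh
    rw [Real.norm_eq_abs, abs_mul, abs_of_pos hE]
    rw [show (2 + 2 / c) * Real.exp (-u ^ 2 / 2) =
      Real.exp (-u ^ 2 / 2) * (2 + 2 / c) by ring]
    apply mul_le_mul_of_nonneg_left _ hE.le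
    rw [abs_le]
    constructor <;> [nlinarith [hb1.1, hb2.2, hc]; nlinarith [hb1.2, hb2.1, hc]]
lemma tendstoExp : Tendsto (fun u : ℝ => Real.exp (-u ^ 2 / 2)) atTop (nhds 0) := by
  apply Real.tendsto_exp_atBot.comp
  have h1 : Tendsto (fun u : ℝ => u ^ 2 / 2) atTop atTop :=
    (tendsto_pow_atTop (by norm_num)).atTop_div_const (by norm_num)
  have h2 := tendsto_neg_atBot_iff.2 h1
  apply h2.congr
  intro u; ring

lemma tendstoF (c : ℝ) (hc : 0 < c) :
    Tendsto (fun u : ℝ => -(Real.exp (-u ^ 2 / 2) * gg c u)) atTop (nhds 0) := by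
  have hlo := tendstoExp.const_mul (-(2 / Real.sqrt c))
  have hhi := tendstoExp.const_mul (2 / Real.sqrt c)
  rw [mul_zero] at hlo hhi
  apply tendsto_of_tendsto_of_tendsto_of_le_of_le' hlo hhi
  · filter_upwards [eventually_ge_atTop (0 : ℝ)] with u hu
    have h1 := gg_le c u hc hu
    have hE := Real.exp_pos (-u ^ 2 / 2)
    nlinarith [mul_le_mul_of_nonneg_left h1 hE.le]
  · filter_upwards [eventually_ge_atTop (0 : ℝ)] with u hu
    have h1 := gg_nonneg c u hc hu
    have hE := Real.exp_pos (-u ^ 2 / 2)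
    have h4 : (0:ℝ) < 2 / Real.sqrt c * Real.exp (-u ^ 2 / 2) := by
      have := Real.sqrt_pos.2 hc; positivity
    nlinarith [mul_nonneg hE.le h1]

lemma key (c y : ℝ) (hc : 0 < c) (hy : 0 ≤ y) :
    ∫ u in Ioi y, hh c u =
      Real.exp (-y ^ 2 / 2) * gg c y - ∫ u in Ioi y, Real.exp (-u ^ 2 / 2) := by
  have hint : IntegrableOn (fun u : ℝ => hh c u + Real.exp (-u ^ 2 / 2)) (Ioi y) :=
    (intHH c y hc hy).add (intExp y)
  have h1 : ∫ u in Ioi y, (hh c u + Real.exp (-u ^ 2 / 2)) =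
      0 - -(Real.exp (-y ^ 2 / 2) * gg c y) := by
    apply integral_Ioi_of_hasDerivAt_of_tendsto
    · exact (hasDerivF c hc y).continuousAt.continuousWithinAt
    · exact fun x _ => hasDerivF c hc x
    · exact hint
    · exact tendstoF c hc
  rw [integral_add (intHH c y hc hy) (intExp y)] at h1
  linarith
lemma hh_factor (c u : ℝ) (hc : 0 < c) :
    (u * gg c u - 2 * (u / Real.sqrt (u ^ 2 + c) - 1) / c - 1) *
        (c * Real.sqrt (u ^ 2 + c)) =
      2 * u * (u ^ 2 + c - 1) - Real.sqrt (u ^ 2 + c) * (2 * u ^ 2 + c - 2) := by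
  have hs2 := sqsq c u hc
  have hs := (sqpos c u hc).ne'
  unfold gg
  field_simp
  linear_combination (2 * u) * hs2

lemma hBA (c u : ℝ) (hc : 0 < c) :
    (2 * u * (u ^ 2 + c - 1)) ^ 2 - (Real.sqrt (u ^ 2 + c) * (2 * u ^ 2 + c - 2)) ^ 2 =
      c * ((4 - c) * u ^ 2 - (c - 2) ^ 2) := by
  have hs2 := sqsq c u hc
  linear_combination (-(2 * u ^ 2 + c - 2) ^ 2) * hs2

lemma hh_nonneg' (c u : ℝ) (hc2 : 2 < c) (hc4 : c < 4) (hu : 0 ≤ u)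
    (hcond : (c - 2) ^ 2 ≤ (4 - c) * u ^ 2) : 0 ≤ hh c u := by
  have hc : (0:ℝ) < c := by linarith
  have hs2 := sqsq c u hc
  have hs := sqpos c u hc
  have hL : 0 ≤ 2 * u * (u ^ 2 + c - 1) := by nlinarith
  have hR : 0 ≤ Real.sqrt (u ^ 2 + c) * (2 * u ^ 2 + c - 2) := by nlinarith
  have hsq : (Real.sqrt (u ^ 2 + c) * (2 * u ^ 2 + c - 2)) ^ 2 ≤
      (2 * u * (u ^ 2 + c - 1)) ^ 2 := by
    have h1 := hBA c u hc
    nlinarith [mul_nonneg hc.le (by linarith : (0:ℝ) ≤ (4 - c) * u ^ 2 - (c - 2) ^ 2)]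
  have hLR : Real.sqrt (u ^ 2 + c) * (2 * u ^ 2 + c - 2) ≤ 2 * u * (u ^ 2 + c - 1) := by
    nlinarith
  have hfac := hh_factor c u hc
  have hX : 0 ≤ u * gg c u - 2 * (u / Real.sqrt (u ^ 2 + c) - 1) / c - 1 := by
    nlinarith [mul_pos hc hs]
  exact mul_nonneg (Real.exp_pos _).le hX

lemma hh_nonpos' (c u : ℝ) (hc2 : 2 < c) (hu : 0 ≤ u)
    (hcond : (4 - c) * u ^ 2 ≤ (c - 2) ^ 2) : hh c u ≤ 0 := by
  have hc : (0:ℝ) < c := by linarith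
  have hs2 := sqsq c u hc
  have hs := sqpos c u hc
  have hL : 0 ≤ 2 * u * (u ^ 2 + c - 1) := by nlinarith
  have hR : 0 ≤ Real.sqrt (u ^ 2 + c) * (2 * u ^ 2 + c - 2) := by nlinarith
  have hsq : (2 * u * (u ^ 2 + c - 1)) ^ 2 ≤
      (Real.sqrt (u ^ 2 + c) * (2 * u ^ 2 + c - 2)) ^ 2 := by
    have h1 := hBA c u hc
    nlinarith [mul_nonneg hc.le (by linarith : (0:ℝ) ≤ (c - 2) ^ 2 - (4 - c) * u ^ 2)]
  have hLR : 2 * u * (u ^ 2 + c - 1) ≤ Real.sqrt (u ^ 2 + c) * (2 * u ^ 2 + c - 2) := by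
    nlinarith
  have hfac := hh_factor c u hc
  have hX : u * gg c u - 2 * (u / Real.sqrt (u ^ 2 + c) - 1) / c - 1 ≤ 0 := by
    nlinarith [mul_pos hc hs]
  exact mul_nonpos_of_nonneg_of_nonpos (Real.exp_pos _).le hX

lemma hh_neg4 (u : ℝ) (hu : 0 ≤ u) : hh 4 u < 0 := by
  have hc : (0:ℝ) < 4 := by norm_num
  have hs2 := sqsq 4 u hc
  have hs := sqpos 4 u hc
  have hL : 0 ≤ 2 * u * (u ^ 2 + 4 - 1) := by nlinarith
  have hR : 0 < Real.sqrt (u ^ 2 + 4) * (2 * u ^ 2 + 4 - 2) := by nlinarith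
  have hsq : (2 * u * (u ^ 2 + 4 - 1)) ^ 2 <
      (Real.sqrt (u ^ 2 + 4) * (2 * u ^ 2 + 4 - 2)) ^ 2 := by
    have h1 := hBA 4 u hc
    nlinarith
  have hLR : 2 * u * (u ^ 2 + 4 - 1) < Real.sqrt (u ^ 2 + 4) * (2 * u ^ 2 + 4 - 2) := by
    nlinarith
  have hfac := hh_factor 4 u hc
  have hX : u * gg 4 u - 2 * (u / Real.sqrt (u ^ 2 + 4) - 1) / 4 - 1 < 0 := by
    nlinarith [mul_pos hc hs]
  exact mul_neg_of_pos_of_neg (Real.exp_pos _) hX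
lemma c8_facts : 2 < 8 / Real.pi ∧ 8 / Real.pi < 4 := by
  have h1 := Real.pi_gt_three
  have h2 := Real.pi_lt_d2
  have h0 := Real.pi_pos
  constructor
  · rw [lt_div_iff₀ h0]; linarith
  · rw [div_lt_iff₀ h0]; linarith

lemma Q0 : ∫ u in Ioi (0:ℝ), Real.exp (-u ^ 2 / 2) = Real.sqrt (2 * π) / 2 := by
  have h : (fun u : ℝ => Real.exp (-u ^ 2 / 2)) = fun u : ℝ => Real.exp (-(1/2 : ℝ) * u ^ 2) := by
    ext u; ring_nf
  rw [h, integral_gaussian_Ioi, show π / (1/2 : ℝ) = 2 * π by ring]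

lemma D0 : ∫ u in Ioi (0:ℝ), hh (8 / Real.pi) u = 0 := by
  have h0 := Real.pi_pos
  have hc : (0:ℝ) < 8 / π := by positivity
  rw [key (8 / π) 0 hc le_rfl, Q0]
  have h3 : 0 < Real.sqrt (2 * π) := Real.sqrt_pos.2 (by positivity)
  have h2 : Real.sqrt (2 * π) ^ 2 = 2 * π := Real.sq_sqrt (by positivity)
  have h1 : Real.sqrt (8 / π) * Real.sqrt (2 * π) = 4 := by
    rw [← Real.sqrt_mul (by positivity), show (8 / π) * (2 * π) = 16 by field_simp; ring,
      show (16:ℝ) = 4 ^ 2 by norm_num, Real.sqrt_sq (by norm_num)]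
  have h4 : Real.sqrt (8 / π) = 4 / Real.sqrt (2 * π) := by
    rw [eq_div_iff h3.ne']; exact h1
  unfold gg
  rw [show ((0:ℝ) ^ 2 + 8 / π) = 8 / π by ring, h4]
  rw [show (-(0:ℝ) ^ 2 / 2) = 0 by ring, Real.exp_zero]
  have h5 : Real.sqrt 2 ^ 2 * Real.sqrt π ^ 2 = 2 * π := by
    rw [Real.sq_sqrt (by norm_num : (0:ℝ) ≤ 2), Real.sq_sqrt h0.le]
  field_simp
  linear_combination (-8) * h2

lemma lower_int (y : ℝ) (hy : 0 ≤ y) : ∫ u in Ioi y, hh 4 u < 0 := by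
  have h1 : 0 < ∫ u in Ioi y, -hh 4 u := by
    rw [setIntegral_pos_iff_support_of_nonneg_ae]
    · have hsub : Ioi y ⊆ Function.support fun u => -hh 4 u := by
        intro u hu
        exact (neg_pos.2 (hh_neg4 u (le_trans hy hu.le))).ne'
      refine lt_of_lt_of_le ?_ (measure_mono (subset_inter hsub Subset.rfl))
      rw [Real.volume_Ioi]
      exact ENNReal.zero_lt_top
    · filter_upwards [ae_restrict_mem measurableSet_Ioi] with u hu
      exact (neg_pos.2 (hh_neg4 u (le_trans hy hu.le))).le
    · exact (intHH 4 y (by norm_num) hy).neg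
  rw [integral_neg] at h1
  linarith

lemma upper_int (y : ℝ) (hy : 0 ≤ y) : 0 ≤ ∫ u in Ioi y, hh (8 / Real.pi) u := by
  obtain ⟨hc2, hc4⟩ := c8_facts
  set c : ℝ := 8 / π with hcdef
  have hc : (0:ℝ) < c := by linarith
  by_cases hcase : (c - 2) ^ 2 ≤ (4 - c) * y ^ 2
  · apply setIntegral_nonneg measurableSet_Ioi
    intro u hu
    have huy : y ≤ u := le_of_lt hu
    apply hh_nonneg' c u hc2 hc4 (le_trans hy huy)
    nlinarith
  · push_neg at hcase
    have hIoc : ∫ u in Ioc 0 y, hh c u ≤ 0 := by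
      apply setIntegral_nonpos measurableSet_Ioc
      intro u hu
      apply hh_nonpos' c u hc2 hu.1.le
      nlinarith [hu.1, hu.2]
    have hInt1 : IntegrableOn (fun u : ℝ => hh c u) (Ioc 0 y) :=
      (contHH c hc).integrableOn_Ioc
    have hsplit : (∫ u in Ioc 0 y, hh c u) + ∫ u in Ioi y, hh c u =
        ∫ u in Ioi 0, hh c u := by
      rw [← setIntegral_union Ioc_disjoint_Ioi_same measurableSet_Ioi hInt1
        (intHH c y hc hy), Ioc_union_Ioi_eq_Ioi hy]
    rw [D0] at hsplit
    linarith

lemma resc (c y E : ℝ) (hc : 0 < c) (hy : 0 ≤ y) :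
    (Real.sqrt (2 * π))⁻¹ * (E * gg c y) =
      Real.sqrt (2 / π) * E / (y + Real.sqrt (y ^ 2 + c)) := by
  have h0 := Real.pi_pos
  have hs := sqpos c y hc
  have hsq := sqsq c y hc
  have hys : 0 < y + Real.sqrt (y ^ 2 + c) := by linarith
  have h3 : 0 < Real.sqrt (2 * π) := Real.sqrt_pos.2 (by positivity)
  have h1 : Real.sqrt (2 / π) * Real.sqrt (2 * π) = 2 := by
    rw [← Real.sqrt_mul (by positivity), show (2 / π) * (2 * π) = 4 by field_simp; ring,
      show (4:ℝ) = 2 ^ 2 by norm_num, Real.sqrt_sq (by norm_num)]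
  have h2 : Real.sqrt (2 / π) = 2 / Real.sqrt (2 * π) := by
    rw [eq_div_iff h3.ne']; exact h1
  have hgg : gg c y = 2 / (y + Real.sqrt (y ^ 2 + c)) := by
    unfold gg
    rw [div_eq_div_iff hc.ne' hys.ne']
    linear_combination 2 * hsq
  rw [hgg, h2]
  field_simp

theorem gaussian_tail_bounds (y : ℝ) (hy : 0 ≤ y) :
    Real.sqrt (2 / Real.pi) * Real.exp (-y ^ 2 / 2) / (y + Real.sqrt (y ^ 2 + 4))
      < (Real.sqrt (2 * Real.pi))⁻¹ * ∫ u in Set.Ioi y, Real.exp (-u ^ 2 / 2) ∧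
    (Real.sqrt (2 * Real.pi))⁻¹ * (∫ u in Set.Ioi y, Real.exp (-u ^ 2 / 2))
      ≤ Real.sqrt (2 / Real.pi) * Real.exp (-y ^ 2 / 2) / (y + Real.sqrt (y ^ 2 + 8 / Real.pi)) := by
  have h0 := Real.pi_pos
  have h3 : 0 < (Real.sqrt (2 * π))⁻¹ := by
    rw [inv_pos]; exact Real.sqrt_pos.2 (by positivity)
  constructor
  · have hk := key 4 y (by norm_num) hy
    have hl := lower_int y hy
    have hEQ : Real.exp (-y ^ 2 / 2) * gg 4 y < ∫ u in Ioi y, Real.exp (-u ^ 2 / 2) := by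
      linarith
    rw [← resc 4 y (Real.exp (-y ^ 2 / 2)) (by norm_num) hy]
    exact mul_lt_mul_of_pos_left hEQ h3
  · have hc : (0:ℝ) < 8 / π := by positivity
    have hk := key (8 / π) y hc hy
    have hl := upper_int y hy
    have hEQ : (∫ u in Ioi y, Real.exp (-u ^ 2 / 2)) ≤
        Real.exp (-y ^ 2 / 2) * gg (8 / π) y := by linarith
    rw [← resc (8 / π) y (Real.exp (-y ^ 2 / 2)) hc hy]
    exact mul_le_mul_of_nonneg_left hEQ h3.le
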